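/- If the rank of F(n, A) is strictly less than n, then F(n, A) = A. -/

import Mathlib

open ZFSet

/-- The approximation function: `F 0 A = ∅`, `F (n+1) A = {F n x | x ∈ A}`. -/
noncomputable def F : ℕ → ZFSet → ZFSet
  | 0, _ => ∅
  | n + 1, A => @ZFSet.image (F n) (Classical.allZFSetDefinable fun s => F n (s 0)) A

lemma mem_F_succ {n : ℕ} {A y : ZFSet} :
    y ∈ F (n + 1) A ↔ ∃ x ∈ A, F n x = y := by
  simp [F, ZFSet.mem_image]

lemma F_of_rank_lt : ∀ (n : ℕ) (A : ZFSet), A.rank < (n : Ordinal) → F n A = A := by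
  intro n
  induction n with
  | zero => intro A hA; exact absurd hA (by simp)
  | succ n ih =>
    intro A hA
    apply ZFSet.ext
    intro y
    rw [mem_F_succ]
    constructor
    · rintro ⟨x, hx, rfl⟩
      rwa [ih x (by
        have := ZFSet.rank_lt_of_mem hx
        have h2 : A.rank ≤ (n : Ordinal) := Order.lt_succ_iff.mp (by
          rw [Order.succ_eq_add_one]; exact_mod_cast hA)
        exact this.trans_le h2)]
    · intro hy
      refine ⟨y, hy, ?_⟩
      apply ih
      have h2 : A.rank ≤ (n : Ordinal) := by
        have : (↑(n+1) : Ordinal) = Order.succ (n : Ordinal) := by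
          simp [Nat.cast_succ, Order.succ]
        rw [this, Order.lt_succ_iff] at hA
        exact hA
      exact (ZFSet.rank_lt_of_mem hy).trans_le h2

lemma le_rank_F : ∀ (n : ℕ) (A : ZFSet), (n : Ordinal) ≤ A.rank → (n : Ordinal) ≤ (F n A).rank := by
  intro n
  induction n with
  | zero => intro A _; simp
  | succ n ih =>
    intro A hA
    have : ∃ x ∈ A, (n : Ordinal) ≤ x.rank := by
      by_contra hc
      push_neg at hc
      have : A.rank ≤ (n : Ordinal) := ZFSet.rank_le_iff.2 fun y hy => hc y hy
      have : (↑(n+1) : Ordinal) ≤ (n : Ordinal) := hA.trans this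
      simp at this
    obtain ⟨x, hx, hxr⟩ := this
    have hmem : F n x ∈ F (n + 1) A := mem_F_succ.2 ⟨x, hx, rfl⟩
    have h1 : (n : Ordinal) ≤ (F n x).rank := ih x hxr
    have h2 := ZFSet.rank_lt_of_mem hmem
    have : (n : Ordinal) < (F (n+1) A).rank := h1.trans_lt h2
    rw [Nat.cast_succ]
    exact Order.add_one_le_of_lt this

theorem stmt_4 (n : ℕ) (A : ZFSet) (h : (F n A).rank < (n : Ordinal)) : F n A = A := by
  apply F_of_rank_lt
  by_contra hc
  push_neg at hc
  exact absurd (le_rank_F n A hc) (not_le.2 h)
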